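/- arXiv:1110.6759 — 2 statements merged into one kernel-verified Lean document; each statement's English description precedes it below -/
import Mathlib

section
/- The infinite series ∑_{k=0}^∞ (2k)!·(3k+2)/(4k+3)!! converges to π/4. -/
open Filter Finset Real intervalIntegral

lemma beta_nat : ∀ (b a : ℕ), ∫ x in (0:ℝ)..1, x ^ a * (1 - x) ^ b
    = (Nat.factorial a * Nat.factorial b : ℝ) / (Nat.factorial (a + b + 1)) := by
  intro b
  induction b with
  | zero =>
    intro a
    have ha : ((a:ℝ) + 1) ≠ 0 := by positivity
    have hf : (Nat.factorial a : ℝ) ≠ 0 := by positivity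
    simp [integral_pow, Nat.factorial_succ]
    field_simp
  | succ b ih =>
    intro a
    have hu : ∀ x ∈ Set.uIcc (0:ℝ) 1, HasDerivAt (fun x : ℝ => (1 - x) ^ (b + 1))
        (-((b+1) * (1 - x) ^ b)) x := by
      intro x _
      have h1 : HasDerivAt (fun x : ℝ => 1 - x) (-1) x := by
        simpa using (hasDerivAt_id x).const_sub 1
      have := h1.fun_pow (b + 1)
      simpa [mul_comm, mul_assoc] using this
    have hv : ∀ x ∈ Set.uIcc (0:ℝ) 1, HasDerivAt (fun x : ℝ => x ^ (a + 1) / (a + 1))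
        (x ^ a) x := by
      intro x _
      have := (hasDerivAt_pow (a + 1) x).div_const ((a : ℝ) + 1)
      have ha : ((a : ℝ) + 1) ≠ 0 := by positivity
      refine this.congr_deriv ?_
      push_cast
      field_simp
    have hIBP := integral_mul_deriv_eq_deriv_mul hu hv
      (by apply Continuous.intervalIntegrable; continuity)
      (by apply Continuous.intervalIntegrable; continuity)
    have hswap : ∫ x in (0:ℝ)..1, x ^ a * (1 - x) ^ (b + 1)
        = ∫ x in (0:ℝ)..1, (1 - x) ^ (b + 1) * x ^ a := by
      congr 1; ext x; ring
    rw [hswap, hIBP]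
    have : ∫ x in (0:ℝ)..1, -((b:ℝ)+1) * (1 - x) ^ b * (x ^ (a+1) / (a+1))
        = (-((b:ℝ)+1) / (a+1)) * ∫ x in (0:ℝ)..1, x ^ (a+1) * (1 - x) ^ b := by
      rw [← intervalIntegral.integral_const_mul]
      congr 1; ext x; ring
    have heq : ∫ x in (0:ℝ)..1, -(((b:ℝ)+1) * (1 - x) ^ b) * (x ^ (a+1) / (a+1))
        = ∫ x in (0:ℝ)..1, -((b:ℝ)+1) * (1 - x) ^ b * (x ^ (a+1) / (a+1)) := by
      congr 1; ext x; ring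
    rw [heq, this, ih (a + 1)]
    have h2 : ((a:ℝ) + 1) ≠ 0 := by positivity
    have h3 : ((a + 1 + b + 1).factorial : ℝ) ≠ 0 := by positivity
    have h4 : ((a + (b + 1) + 1).factorial : ℝ) ≠ 0 := by positivity
    have e1 : (a + (b+1) + 1) = (a + 1 + b + 1) := by ring
    rw [e1]
    have e2 : ((a+1).factorial : ℝ) = ((a:ℝ)+1) * a.factorial := by
      push_cast [Nat.factorial_succ]; ring
    have e3 : ((b+1).factorial : ℝ) = ((b:ℝ)+1) * b.factorial := by
      push_cast [Nat.factorial_succ]; ring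
    rw [e2, e3]
    field_simp
    ring

noncomputable def Tn (n : ℕ) : ℝ := 2 ^ n * (Nat.factorial n : ℝ) ^ 2 / (Nat.factorial (2 * n + 1))

lemma Tn_int (n : ℕ) : ∫ x in (0:ℝ)..1, (2 * x * (1 - x)) ^ n = Tn n := by
  have h : ∀ x : ℝ, (2 * x * (1 - x)) ^ n = (2:ℝ) ^ n * (x ^ n * (1 - x) ^ n) := by
    intro x
    rw [show (2:ℝ)*x*(1-x) = 2*(x*(1-x)) from by ring, mul_pow, mul_pow]
  simp_rw [h]
  rw [intervalIntegral.integral_const_mul, beta_nat n n, Tn]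
  have : n + n + 1 = 2 * n + 1 := by ring
  rw [this]
  ring

lemma denom_pos (x : ℝ) : (0:ℝ) < 2 * x ^ 2 - 2 * x + 1 := by nlinarith [sq_nonneg (2 * x - 1)]

lemma arctan_int : ∫ x in (0:ℝ)..1, 1 / (2 * x ^ 2 - 2 * x + 1) = π / 2 := by
  have hder : ∀ x ∈ Set.uIcc (0:ℝ) 1, HasDerivAt (fun x : ℝ => Real.arctan (2 * x - 1))
      (1 / (2 * x ^ 2 - 2 * x + 1)) x := by
    intro x _
    have h1 : HasDerivAt (fun x : ℝ => 2 * x - 1) 2 x := by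
      simpa using ((hasDerivAt_id x).const_mul 2).sub_const 1
    have := h1.arctan
    convert this using 1
    have h2 := denom_pos x
    have h3 : (0:ℝ) < 1 + (2 * x - 1) ^ 2 := by positivity
    field_simp
    rw [div_eq_iff (by nlinarith)]
    ring
  have hcont : IntervalIntegrable (fun x : ℝ => 1 / (2 * x ^ 2 - 2 * x + 1)) MeasureTheory.volume 0 1 := by
    apply Continuous.intervalIntegrable
    apply Continuous.div continuous_const (by continuity)
    intro x; exact (denom_pos x).ne'
  rw [intervalIntegral.integral_eq_sub_of_hasDerivAt hder hcont]
  norm_num [Real.arctan_one, Real.arctan_neg]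
  ring

lemma sum_T (N : ℕ) : ∑ n ∈ range N, Tn n
    = π / 2 - ∫ x in (0:ℝ)..1, (2 * x * (1 - x)) ^ N / (2 * x ^ 2 - 2 * x + 1) := by
  have h1 : ∑ n ∈ range N, Tn n = ∫ x in (0:ℝ)..1, ∑ n ∈ range N, (2 * x * (1 - x)) ^ n := by
    rw [intervalIntegral.integral_finset_sum]
    · exact Finset.sum_congr rfl fun n _ => (Tn_int n).symm
    · intro n _
      apply Continuous.intervalIntegrable; continuity
  rw [h1]
  have h2 : ∀ x : ℝ, ∑ n ∈ range N, (2 * x * (1 - x)) ^ n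
      = 1 / (2 * x ^ 2 - 2 * x + 1) - (2 * x * (1 - x)) ^ N / (2 * x ^ 2 - 2 * x + 1) := by
    intro x
    have hpos := denom_pos x
    have hne : (2 : ℝ) * x * (1 - x) ≠ 1 := by nlinarith
    rw [geom_sum_eq hne]
    have : (2 * x * (1 - x)) - 1 = -(2 * x ^ 2 - 2 * x + 1) := by ring
    rw [this, div_neg, ← neg_div, neg_sub, sub_div]
  simp_rw [h2]
  rw [intervalIntegral.integral_sub, arctan_int]
  · apply Continuous.intervalIntegrable
    apply Continuous.div continuous_const (by continuity)
    intro x; exact (denom_pos x).ne'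
  · apply Continuous.intervalIntegrable
    apply Continuous.div (by continuity) (by continuity)
    intro x; exact (denom_pos x).ne'

lemma remainder_bound (N : ℕ) :
    ‖∫ x in (0:ℝ)..1, (2 * x * (1 - x)) ^ N / (2 * x ^ 2 - 2 * x + 1)‖ ≤ 2 * (1/2) ^ N := by
  have h := intervalIntegral.norm_integral_le_of_norm_le_const
    (C := 2 * (1/2) ^ N) (f := fun x : ℝ => (2 * x * (1 - x)) ^ N / (2 * x ^ 2 - 2 * x + 1))
    (a := 0) (b := 1) ?_
  · simpa using h
  · intro x hx
    rw [Set.uIoc_of_le zero_le_one] at hx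
    obtain ⟨hx0, hx1⟩ := hx
    have hd := denom_pos x
    have hy0 : (0:ℝ) ≤ 2 * x * (1 - x) := by nlinarith
    have hy1 : 2 * x * (1 - x) ≤ 1/2 := by nlinarith [sq_nonneg (2*x - 1)]
    have hnum : (0:ℝ) ≤ (2 * x * (1 - x)) ^ N := pow_nonneg hy0 N
    have hnum2 : (2 * x * (1 - x)) ^ N ≤ (1/2) ^ N := pow_le_pow_left₀ hy0 hy1 N
    have hdge : (1:ℝ)/2 ≤ 2 * x ^ 2 - 2 * x + 1 := by nlinarith [sq_nonneg (2*x - 1)]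
    rw [Real.norm_eq_abs, abs_of_nonneg (by positivity)]
    calc (2 * x * (1 - x)) ^ N / (2 * x ^ 2 - 2 * x + 1)
        ≤ (1/2) ^ N / (1/2) := by
          exact div_le_div₀ (by positivity) hnum2 (by norm_num) hdge
      _ = 2 * (1/2) ^ N := by ring

lemma pair (k : ℕ) :
    (Nat.factorial (2 * k) : ℝ) * (3 * (k : ℝ) + 2) / (Nat.doubleFactorial (4 * k + 3) : ℝ)
      = (Tn (2 * k) + Tn (2 * k + 1)) / 2 := by
  have hnat : (4*k+4).factorial = 2^(2*k+2) * (2*k+2).factorial * (4*k+3).doubleFactorial := by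
    have h1 : (4*k+3+1).factorial = (4*k+3+1).doubleFactorial * (4*k+3).doubleFactorial :=
      Nat.factorial_eq_mul_doubleFactorial (4*k+3)
    have h2 : (2*(2*k+2)).doubleFactorial = 2^(2*k+2) * (2*k+2).factorial :=
      Nat.doubleFactorial_two_mul (2*k+2)
    have e1 : 4*k+3+1 = 4*k+4 := by omega
    have e2 : 2*(2*k+2) = 4*k+4 := by omega
    rw [e1] at h1
    rw [e2] at h2
    rw [h1, h2]
  have hDF : ((4*k+3).doubleFactorial : ℝ)
      = ((4*k+4).factorial : ℝ) / (2^(2*k+2) * (2*k+2).factorial) := by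
    have := congrArg (fun n : ℕ => (n : ℝ)) hnat
    push_cast at this
    rw [this]
    have h1 : ((2:ℝ))^(2*k+2) ≠ 0 := by positivity
    have h2 : ((2*k+2).factorial : ℝ) ≠ 0 := by
      exact_mod_cast (Nat.factorial_pos _).ne'
    field_simp
  rw [hDF, Tn, Tn]
  have i1 : 2*(2*k)+1 = 4*k+1 := by omega
  have i2 : 2*(2*k+1)+1 = 4*k+3 := by omega
  rw [i1, i2]
  have e1 : ((4*k+4).factorial : ℝ)
      = (4*(k:ℝ)+4) * ((4*(k:ℝ)+3) * ((4*(k:ℝ)+2) * ((4*k+1).factorial : ℝ))) := by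
    have : (4*k+4).factorial = (4*k+4) * ((4*k+3) * ((4*k+2) * (4*k+1).factorial)) := by
      rw [show 4*k+4 = (4*k+3)+1 by omega, Nat.factorial_succ,
        show 4*k+3+1 = (4*k+3)+1 by omega]
      rw [show 4*k+3 = (4*k+2)+1 by omega, Nat.factorial_succ]
      rw [show 4*k+2 = (4*k+1)+1 by omega, Nat.factorial_succ]
    rw [this]
    push_cast
    try ring
  have e3 : ((4*k+3).factorial : ℝ) = (4*(k:ℝ)+3) * ((4*(k:ℝ)+2) * ((4*k+1).factorial : ℝ)) := by
    have : (4*k+3).factorial = (4*k+3) * ((4*k+2) * (4*k+1).factorial) := by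
      rw [show 4*k+3 = (4*k+2)+1 by omega, Nat.factorial_succ]
      rw [show 4*k+2 = (4*k+1)+1 by omega, Nat.factorial_succ]
    rw [this]
    push_cast
    try ring
  have e4 : ((2*k+2).factorial : ℝ) = (2*(k:ℝ)+2) * ((2*(k:ℝ)+1) * ((2*k).factorial : ℝ)) := by
    have : (2*k+2).factorial = (2*k+2) * ((2*k+1) * (2*k).factorial) := by
      rw [show 2*k+2 = (2*k+1)+1 by omega, Nat.factorial_succ, Nat.factorial_succ]
    rw [this]
    push_cast
    try ring
  have e5 : ((2*k+1).factorial : ℝ) = (2*(k:ℝ)+1) * ((2*k).factorial : ℝ) := by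
    have : (2*k+1).factorial = (2*k+1) * (2*k).factorial := Nat.factorial_succ _
    rw [this]
    push_cast
    try ring
  rw [e1, e3, e4, e5]
  have n1 : ((4*k+1).factorial : ℝ) ≠ 0 := by exact_mod_cast (Nat.factorial_pos _).ne'
  have n2 : ((2*k).factorial : ℝ) ≠ 0 := by exact_mod_cast (Nat.factorial_pos _).ne'
  have n3 : ((2:ℝ))^(2*k+2) ≠ 0 := by positivity
  have n4 : (4*(k:ℝ)+4) ≠ 0 := by positivity
  have n5 : (4*(k:ℝ)+3) ≠ 0 := by positivity
  have n6 : (4*(k:ℝ)+2) ≠ 0 := by positivity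
  field_simp
  ring

theorem stmt5 :
    Tendsto (fun N => ∑ k ∈ range N,
      (Nat.factorial (2 * k) : ℝ) * (3 * (k : ℝ) + 2) /
        (Nat.doubleFactorial (4 * k + 3) : ℝ))
      atTop (nhds (Real.pi / 4)) := by
  have hsum : ∀ N : ℕ, (∑ k ∈ range N,
      (Nat.factorial (2 * k) : ℝ) * (3 * (k : ℝ) + 2) /
        (Nat.doubleFactorial (4 * k + 3) : ℝ)) = (∑ n ∈ range (2 * N), Tn n) / 2 := by
    intro N
    induction N with
    | zero => simp
    | succ N ih =>
      rw [Finset.sum_range_succ, ih, show 2 * (N + 1) = (2 * N) + 1 + 1 by ring,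
        Finset.sum_range_succ, Finset.sum_range_succ, pair N]
      ring
  have key : ∀ N : ℕ, (∑ k ∈ range N,
      (Nat.factorial (2 * k) : ℝ) * (3 * (k : ℝ) + 2) /
        (Nat.doubleFactorial (4 * k + 3) : ℝ))
      = π / 4 - (∫ x in (0:ℝ)..1, (2 * x * (1 - x)) ^ (2*N) / (2 * x ^ 2 - 2 * x + 1)) / 2 := by
    intro N
    rw [hsum N, sum_T (2 * N)]
    ring
  simp_rw [key]
  have hR : Tendsto (fun N : ℕ =>
      (∫ x in (0:ℝ)..1, (2 * x * (1 - x)) ^ (2*N) / (2 * x ^ 2 - 2 * x + 1)) / 2)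
      atTop (nhds 0) := by
    apply squeeze_zero_norm (a := fun N : ℕ => (1/4 : ℝ) ^ N)
    · intro N
      have h := remainder_bound (2 * N)
      have h2 : ((1:ℝ)/2) ^ (2 * N) = (1/4) ^ N := by
        rw [pow_mul]; norm_num
      rw [h2] at h
      rw [norm_div, Real.norm_eq_abs (2:ℝ), abs_of_pos (by norm_num : (0:ℝ) < 2)]
      linarith
    · exact tendsto_pow_atTop_nhds_zero_of_lt_one (by norm_num) (by norm_num)
  have := (tendsto_const_nhds (x := π/4) (f := atTop (α := ℕ))).sub hR
  simpa using this
end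

section
/- The infinite series ∑_{k=1}^∞ (2k)!·(3k+1)/(4k+1)!! converges to π/4. -/
open Filter Finset Real

open MeasureTheory intervalIntegral

lemma prod_fac (m n : ℕ) :
    (m.factorial : ℂ) * ∏ j ∈ Finset.range (n+1), ((m : ℂ) + 1 + j) =
      ((m + n + 1).factorial : ℂ) := by
  induction n with
  | zero =>
    simp [Nat.factorial_succ]
    ring
  | succ n ih =>
    rw [Finset.prod_range_succ, ← mul_assoc, ih]
    have h3 : m + (n+1) + 1 = (m + n + 1) + 1 := by omega
    rw [h3, Nat.factorial_succ, Nat.cast_mul]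
    have key : (m+n+1) * (m+n).factorial * (m+1+(n+1)) = (m+n+1+1).factorial := by
      rw [Nat.factorial_succ, Nat.factorial_succ]; ring
    exact_mod_cast key

lemma beta_nat_s6 (m n : ℕ) :
    ∫ x in (0:ℝ)..1, x ^ m * (1 - x) ^ n
      = (m.factorial : ℝ) * n.factorial / (m + n + 1).factorial := by
  have h := Complex.betaIntegral_eval_nat_add_one_right
    (u := (m : ℂ) + 1) (by simp; positivity) n
  rw [Complex.betaIntegral] at h
  have h2 : ∀ x : ℝ, ((x:ℂ)) ^ ((m:ℂ) + 1 - 1) * (1 - (x:ℂ)) ^ (((n:ℕ):ℂ) + 1 - 1)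
      = ((x ^ m * (1 - x) ^ n : ℝ) : ℂ) := by
    intro x
    rw [add_sub_cancel_right, add_sub_cancel_right, Complex.cpow_natCast,
      Complex.cpow_natCast]
    push_cast
    ring
  simp_rw [h2, intervalIntegral.integral_ofReal] at h
  have hP := prod_fac m n
  have hfacm : (m.factorial : ℂ) ≠ 0 := by exact_mod_cast m.factorial_ne_zero
  have hfac : ((m+n+1).factorial : ℂ) ≠ 0 := by exact_mod_cast (m+n+1).factorial_ne_zero
  have hPne : (∏ j ∈ Finset.range (n+1), ((m : ℂ) + 1 + j)) ≠ 0 := by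
    intro h0
    rw [h0, mul_zero] at hP
    exact hfac hP.symm
  have : ((∫ x in (0:ℝ)..1, x ^ m * (1 - x) ^ n : ℝ) : ℂ)
      = ((m.factorial : ℝ) * n.factorial / (m + n + 1).factorial : ℝ) := by
    rw [h]
    push_cast
    rw [div_eq_div_iff hPne hfac]
    rw [← hP]
    ring
  exact_mod_cast this

/-- the summand functions -/
noncomputable def fk (k : ℕ) (x : ℝ) : ℝ := (3 * (k:ℝ) + 1) * (2*x*(1-x)) ^ (2*k)

/-- the limit function on (0,1) -/
noncomputable def gg (x : ℝ) : ℝ :=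
  3*(2*x*(1-x))^2/(1-(2*x*(1-x))^2)^2 + 1/(1-(2*x*(1-x))^2) - 1

/-- the antiderivative -/
noncomputable def FF (x : ℝ) : ℝ :=
  -x + (1/2) * Real.arctan (2*x-1) + (2*x-1)/(4*(3-(2*x-1)^2))
    + 3*(2*x-1)/(4*(1+(2*x-1)^2))

lemma term_eq (k : ℕ) :
    ((2*k).factorial : ℝ) * (3 * (k:ℝ) + 1) / ((4*k+1).doubleFactorial : ℝ)
      = ∫ x in (0:ℝ)..1, fk k x := by
  have h1 : (∫ x in (0:ℝ)..1, fk k x)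
      = (3 * (k:ℝ) + 1) * (4^k * ∫ x in (0:ℝ)..1, x^(2*k)*(1-x)^(2*k)) := by
    rw [← intervalIntegral.integral_const_mul, ← intervalIntegral.integral_const_mul]
    apply intervalIntegral.integral_congr
    intro x _
    show (3 * (k:ℝ) + 1) * (2*x*(1-x)) ^ (2*k) = _
    have : (2*x*(1-x)) ^ (2*k) = 4^k * (x^(2*k)*(1-x)^(2*k)) := by
      rw [show (2*x*(1-x)) = 2*(x*(1-x)) by ring, mul_pow, mul_pow,
        pow_mul, pow_mul, pow_mul]
      norm_num
    rw [this]
  rw [h1, beta_nat_s6]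
  have hfac : (4*k+1).factorial = (4*k+1).doubleFactorial * (4^k * (2*k).factorial) := by
    have h0 := Nat.factorial_eq_mul_doubleFactorial (4*k)
    have h4 : (4*k).doubleFactorial = 4^k * (2*k).factorial := by
      rw [show 4*k = 2*(2*k) by ring, Nat.doubleFactorial_two_mul, pow_mul]
      norm_num
    rw [h0, h4]
  have hidx : 2*k + 2*k + 1 = 4*k+1 := by ring
  rw [hidx, hfac]
  have hd : ((4*k+1).doubleFactorial : ℝ) ≠ 0 := by
    exact_mod_cast (Nat.doubleFactorial_pos _).ne'
  have hf : ((2*k).factorial : ℝ) ≠ 0 := by exact_mod_cast (2*k).factorial_ne_zero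
  push_cast
  field_simp

lemma x_facts {x : ℝ} (hx : x ∈ Set.Icc (0:ℝ) 1) :
    0 ≤ (2*x*(1-x))^2 ∧ (2*x*(1-x))^2 ≤ 1/4 := by
  obtain ⟨h0, h1⟩ := hx
  constructor
  · positivity
  · nlinarith [sq_nonneg (2*x-1), sq_nonneg (x*(1-x)), mul_nonneg h0 (by linarith : (0:ℝ) ≤ 1-x)]

lemma hasSum_fk {x : ℝ} (hx : x ∈ Set.Icc (0:ℝ) 1) :
    HasSum (fun k => fk k x) (gg x + 1) := by
  obtain ⟨hs0, hs4⟩ := x_facts hx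
  set s : ℝ := (2*x*(1-x))^2 with hsdef
  have hs1 : s < 1 := lt_of_le_of_lt hs4 (by norm_num)
  have hnorm : ‖s‖ < 1 := by rw [Real.norm_eq_abs, abs_of_nonneg hs0]; exact hs1
  have hgeo : HasSum (fun n : ℕ => s ^ n) (1/(1-s)) := by
    simpa using hasSum_geometric_of_lt_one hs0 hs1
  have hlin : HasSum (fun n : ℕ => (n:ℝ) * s ^ n) (s/(1-s)^2) :=
    hasSum_coe_mul_geometric_of_norm_lt_one hnorm
  have hsum := (hlin.mul_left 3).add hgeo
  have heq : (fun n : ℕ => 3 * ((n:ℝ) * s ^ n) + s ^ n) = fun k => fk k x := by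
    funext k
    rw [fk, pow_mul]
    ring
  rw [heq] at hsum
  have : gg x + 1 = 3 * (s/(1-s)^2) + 1/(1-s) := by
    rw [gg, ← hsdef]
    ring
  rwa [this]

lemma fk_nonneg (k : ℕ) {x : ℝ} : 0 ≤ fk k x := by
  rw [fk, pow_mul]
  positivity

lemma fk_le (k : ℕ) {x : ℝ} (hx : x ∈ Set.Icc (0:ℝ) 1) :
    fk k x ≤ 4 * (1/2)^k := by
  obtain ⟨hs0, hs4⟩ := x_facts hx
  have h1 : fk k x ≤ (3*(k:ℝ)+1) * (1/4)^k := by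
    rw [fk, pow_mul]
    apply mul_le_mul_of_nonneg_left (pow_le_pow_left₀ hs0 hs4 k) (by positivity)
  have h2 : (3*(k:ℝ)+1) ≤ 4 * 2^k := by
    have := Nat.lt_two_pow_self (n := k)
    have hk : (k:ℝ) + 1 ≤ 2^k := by exact_mod_cast this
    nlinarith [hk, (by positivity : (0:ℝ) ≤ (k:ℝ))]
  calc fk k x ≤ (3*(k:ℝ)+1) * (1/4)^k := h1
    _ ≤ (4 * 2^k) * (1/4)^k := by
        apply mul_le_mul_of_nonneg_right h2 (by positivity)
    _ = 4 * (1/2)^k := by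
        rw [mul_assoc, ← mul_pow]
        norm_num

lemma denom_ne {x : ℝ} (hx : x ∈ Set.uIcc (0:ℝ) 1) : (1 - (2*x*(1-x))^2) ≠ 0 := by
  rw [Set.uIcc_of_le (by norm_num : (0:ℝ) ≤ 1)] at hx
  have := (x_facts hx).2
  intro h
  nlinarith

lemma gg_deriv {x : ℝ} (hx : x ∈ Set.uIcc (0:ℝ) 1) : HasDerivAt FF (gg x) x := by
  have hxI : x ∈ Set.Icc (0:ℝ) 1 := by
    rwa [Set.uIcc_of_le (by norm_num : (0:ℝ) ≤ 1)] at hx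
  obtain ⟨hx0, hx1⟩ := hxI
  have hu : HasDerivAt (fun x : ℝ => 2*x-1) 2 x := by
    simpa using ((hasDerivAt_id x).const_mul 2).sub_const 1
  have h1 : HasDerivAt (fun x : ℝ => -x) (-1) x := (hasDerivAt_id x).neg
  have h2 : HasDerivAt (fun x : ℝ => (1/2) * Real.arctan (2*x-1))
      (1/2 * (1 / (1 + (2*x-1)^2) * 2)) x := hu.arctan.const_mul (1/2)
  have hden3 : HasDerivAt (fun x : ℝ => 4*(3-(2*x-1)^2))
      (4 * -(2 * (2*x-1)^1 * 2)) x := ((hu.pow 2).const_sub 3).const_mul 4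
  have hne3 : (4*(3-(2*x-1)^2)) ≠ 0 := by nlinarith [sq_nonneg (2*x-1)]
  have h3 : HasDerivAt (fun x : ℝ => (2*x-1)/(4*(3-(2*x-1)^2)))
      ((2 * (4*(3-(2*x-1)^2)) - (2*x-1) * (4 * -(2 * (2*x-1)^1 * 2))) /
        (4*(3-(2*x-1)^2))^2) x := hu.div hden3 hne3
  have hden4 : HasDerivAt (fun x : ℝ => 4*(1+(2*x-1)^2))
      (4 * (2 * (2*x-1)^1 * 2)) x := by
    have : HasDerivAt (fun x : ℝ => 1+(2*x-1)^2) (2 * (2*x-1)^1 * 2) x := by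
      simpa using (hu.pow 2).const_add 1
    exact this.const_mul 4
  have hne4 : (4*(1+(2*x-1)^2)) ≠ 0 := by positivity
  have hnum4 : HasDerivAt (fun x : ℝ => 3*(2*x-1)) (3*2) x := hu.const_mul 3
  have h4 : HasDerivAt (fun x : ℝ => 3*(2*x-1)/(4*(1+(2*x-1)^2)))
      ((3*2 * (4*(1+(2*x-1)^2)) - 3*(2*x-1) * (4 * (2 * (2*x-1)^1 * 2))) /
        (4*(1+(2*x-1)^2))^2) x := hnum4.div hden4 hne4
  have hcomb := ((h1.add h2).add h3).add h4
  have hFF : FF = fun x : ℝ => -x + (1/2) * Real.arctan (2*x-1) +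
      (2*x-1)/(4*(3-(2*x-1)^2)) + 3*(2*x-1)/(4*(1+(2*x-1)^2)) := rfl
  rw [hFF]
  refine hcomb.congr_deriv ?_
  have hs : (1 - (2*x*(1-x))^2) ≠ 0 := by
    have := (x_facts ⟨hx0, hx1⟩).2
    intro h; nlinarith
  have h14 : (1 + (2*x-1)^2) ≠ 0 := by positivity
  have h34 : (3 - (2*x-1)^2) ≠ 0 := by nlinarith [sq_nonneg (2*x-1)]
  rw [gg]
  rw [div_add_div _ _ (pow_ne_zero 2 hs) hs, div_sub_one (mul_ne_zero (pow_ne_zero 2 hs) hs),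
    eq_div_iff (mul_ne_zero (pow_ne_zero 2 hs) hs)]
  field_simp
  ring

lemma gg_contOn : ContinuousOn gg (Set.uIcc (0:ℝ) 1) := by
  have hne : ∀ x ∈ Set.uIcc (0:ℝ) 1, (1 - (2*x*(1-x))^2) ≠ 0 := fun x hx => denom_ne hx
  apply ContinuousOn.sub _ continuousOn_const
  apply ContinuousOn.add
  · exact ContinuousOn.div (by fun_prop) (by fun_prop)
      (fun x hx => pow_ne_zero 2 (hne x hx))
  · exact ContinuousOn.div continuousOn_const (by fun_prop) hne

lemma gg_integral : ∫ x in (0:ℝ)..1, gg x = Real.pi / 4 := by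
  rw [intervalIntegral.integral_eq_sub_of_hasDerivAt (fun x hx => gg_deriv hx)
    (gg_contOn.intervalIntegrable)]
  have e1 : FF 1 = -1 + (1/2) * (Real.pi/4) + 1/8 + 3/8 := by
    rw [FF]
    norm_num [Real.arctan_one]
  have e0 : FF 0 = (1/2) * (-(Real.pi/4)) + (-1)/8 + (-3)/8 := by
    rw [FF]
    norm_num [Real.arctan_neg, Real.arctan_one]
  rw [e1, e0]
  ring

theorem stmt6 :
    Tendsto (fun N => ∑ k ∈ Ico 1 N,
      (Nat.factorial (2 * k) : ℝ) * (3 * (k : ℝ) + 1) /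
        (Nat.doubleFactorial (4 * k + 1) : ℝ))
      atTop (nhds (Real.pi / 4)) := by
  rw [← gg_integral]
  have hrw : ∀ N : ℕ, ∑ k ∈ Ico 1 N,
      (Nat.factorial (2 * k) : ℝ) * (3 * (k : ℝ) + 1) /
        (Nat.doubleFactorial (4 * k + 1) : ℝ)
      = ∫ x in (0:ℝ)..1, ∑ k ∈ Ico 1 N, fk k x := by
    intro N
    rw [intervalIntegral.integral_finset_sum
      (fun k _ => (by unfold fk; fun_prop : Continuous (fk k)).intervalIntegrable _ _)]
    exact Finset.sum_congr rfl fun k _ => term_eq k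
  simp only [hrw]
  apply intervalIntegral.tendsto_integral_filter_of_dominated_convergence
    (bound := fun _ => (8:ℝ))
  · exact Eventually.of_forall fun N =>
      ((continuous_finset_sum _ fun k _ => by unfold fk; fun_prop).aestronglyMeasurable).restrict
  · refine Eventually.of_forall fun N => MeasureTheory.ae_of_all _ fun x hx => ?_
    have hxI : x ∈ Set.Icc (0:ℝ) 1 := by
      rw [Set.uIoc_of_le (by norm_num : (0:ℝ) ≤ 1)] at hx
      exact ⟨le_of_lt hx.1, hx.2⟩
    rw [Real.norm_eq_abs, abs_of_nonneg (Finset.sum_nonneg fun k _ => fk_nonneg k)]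
    calc ∑ k ∈ Ico 1 N, fk k x ≤ ∑ k ∈ Ico 1 N, 4 * (1/2:ℝ)^k :=
          Finset.sum_le_sum fun k _ => fk_le k hxI
      _ ≤ ∑ k ∈ Finset.range N, 4 * (1/2:ℝ)^k :=
          Finset.sum_le_sum_of_subset_of_nonneg
            (fun k hk => Finset.mem_range.2 (Finset.mem_Ico.1 hk).2)
            (fun k _ _ => by positivity)
      _ = 4 * ∑ k ∈ Finset.range N, (1/2:ℝ)^k := by rw [Finset.mul_sum]
      _ ≤ 4 * 2 := by
          have := sum_geometric_two_le N
          linarith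
      _ = 8 := by norm_num
  · exact intervalIntegrable_const
  · refine MeasureTheory.ae_of_all _ fun x hx => ?_
    have hxI : x ∈ Set.Icc (0:ℝ) 1 := by
      rw [Set.uIoc_of_le (by norm_num : (0:ℝ) ≤ 1)] at hx
      exact ⟨le_of_lt hx.1, hx.2⟩
    have hS := (hasSum_fk hxI).tendsto_sum_nat
    have hT : Tendsto (fun N => (∑ k ∈ Finset.range N, fk k x) - 1) atTop (nhds (gg x)) := by
      simpa using hS.sub_const 1
    apply hT.congr'
    filter_upwards [eventually_ge_atTop 1] with N hN
    rw [Finset.sum_Ico_eq_sub _ hN]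
    norm_num [fk]
end
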